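/- Fix $\gamma > 0$ and $d \ge 1$. Define $\omega_\theta^2 = 4\sum_{a=1}^d \sin^2(\pi \theta^a)$ for $\theta \in [0,1]^d$ and $C_4(t) = \int_{[0,1]^d} \frac{\sin^2(2\pi\theta^1)}{\omega_\theta^2} \exp(-t\gamma\omega_\theta^2)\, d\theta$. Then there exists a constant $C > 1$ such that for all sufficiently large $t$, $\frac{1}{C} t^{-d/2} \le C_4(t) \le C\, t^{-d/2}$. -/

import Mathlib

open Real MeasureTheory Filter

lemma box_indicator_prod {d : ℕ} (g : ℝ → ℝ) (θ : Fin d → ℝ) :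
    (Set.Icc (0 : Fin d → ℝ) 1).indicator (fun θ => ∏ i, g (θ i)) θ
      = ∏ i, (Set.Icc (0:ℝ) 1).indicator g (θ i) := by
  have hmem : θ ∈ Set.Icc (0 : Fin d → ℝ) 1 ↔ ∀ i, θ i ∈ Set.Icc (0:ℝ) 1 := by
    simp [Set.mem_Icc, Pi.le_def, forall_and]
  by_cases h : θ ∈ Set.Icc (0 : Fin d → ℝ) 1
  · rw [Set.indicator_of_mem h]
    have := hmem.1 h
    exact Finset.prod_congr rfl fun i _ => (Set.indicator_of_mem (this i) g).symm
  · rw [Set.indicator_of_notMem h]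
    obtain ⟨i, hi⟩ := not_forall.1 (fun hh => h (hmem.2 hh))
    exact (Finset.prod_eq_zero (Finset.mem_univ i) (Set.indicator_of_notMem hi g)).symm

lemma box_prod_integral {d : ℕ} (g : ℝ → ℝ) :
    ∫ θ in Set.Icc (0 : Fin d → ℝ) 1, ∏ i, g (θ i)
      = (∫ x in Set.Icc (0:ℝ) 1, g x) ^ d := by
  rw [← integral_indicator measurableSet_Icc]
  simp_rw [box_indicator_prod g]
  rw [MeasureTheory.integral_fintype_prod_volume_eq_pow (ι := Fin d) ((Set.Icc (0:ℝ) 1).indicator g),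
    integral_indicator measurableSet_Icc, Fintype.card_fin]

lemma sin_pi_ge_min {x : ℝ} (h0 : 0 ≤ x) (h1 : x ≤ 1) :
    2 * min x (1-x) ≤ Real.sin (π * x) := by
  rcases le_total x (1/2) with h | h
  · have := Real.mul_le_sin (x := π * x) (by positivity)
      (by nlinarith [Real.pi_pos])
    have hπ := Real.pi_pos
    calc 2 * min x (1-x) ≤ 2 * x := by
          have : min x (1-x) ≤ x := min_le_left _ _
          linarith
      _ = 2/π * (π * x) := by field_simp
      _ ≤ Real.sin (π * x) := this
  · have hπ := Real.pi_pos
    have hs : Real.sin (π * x) = Real.sin (π * (1-x)) := by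
      rw [show π * (1-x) = π - π * x by ring, Real.sin_pi_sub]
    have := Real.mul_le_sin (x := π * (1-x)) (by nlinarith)
      (by nlinarith)
    rw [hs]
    calc 2 * min x (1-x) ≤ 2 * (1-x) := by
          have : min x (1-x) ≤ 1-x := min_le_right _ _
          linarith
      _ = 2/π * (π * (1-x)) := by field_simp
      _ ≤ Real.sin (π * (1-x)) := this

lemma oneD_bound (γ t : ℝ) (hγ : 0 < γ) (ht : (4:ℝ) ≤ t) :
    ∫ x in Set.Icc (0:ℝ) 1, Real.exp (-(t*γ)*(4*Real.sin (π*x)^2))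
      ≤ 2 * Real.sqrt (π/(16*t*γ)) := by
  have ht0 : (0:ℝ) < t := by linarith
  set b : ℝ := 16*t*γ with hb
  have hb0 : 0 < b := by positivity
  set e1 : ℝ → ℝ := fun x => Real.exp (-b * x^2) with he1
  have hpt : ∀ x ∈ Set.Icc (0:ℝ) 1,
      Real.exp (-(t*γ)*(4*Real.sin (π*x)^2)) ≤ e1 x + e1 (1-x) := by
    intro x hx
    obtain ⟨h0, h1⟩ := hx
    have hmin := sin_pi_ge_min h0 h1
    have hmin0 : 0 ≤ min x (1-x) := le_min h0 (by linarith)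
    have hsq : 4 * (min x (1-x))^2 ≤ Real.sin (π*x)^2 := by
      nlinarith [hmin, hmin0]
    have key : Real.exp (-(t*γ)*(4*Real.sin (π*x)^2)) ≤ Real.exp (-b * (min x (1-x))^2) := by
      apply Real.exp_le_exp.2
      nlinarith
    rcases min_choice x (1-x) with hm | hm
    · rw [hm] at key
      exact key.trans (le_add_of_nonneg_right (Real.exp_nonneg _))
    · rw [hm] at key
      exact key.trans (le_add_of_nonneg_left (Real.exp_nonneg _))
  have hc1 : Continuous e1 := by fun_prop
  have hi1 : IntegrableOn e1 (Set.Icc (0:ℝ) 1) := hc1.continuousOn.integrableOn_compact isCompact_Icc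
  have hi2 : IntegrableOn (fun x => e1 (1-x)) (Set.Icc (0:ℝ) 1) :=
    (hc1.comp (by fun_prop)).continuousOn.integrableOn_compact isCompact_Icc
  have step1 : ∫ x in Set.Icc (0:ℝ) 1, Real.exp (-(t*γ)*(4*Real.sin (π*x)^2))
      ≤ ∫ x in Set.Icc (0:ℝ) 1, (e1 x + e1 (1-x)) := by
    apply setIntegral_mono_on _ (hi1.add hi2) measurableSet_Icc hpt
    exact (Continuous.continuousOn (by fun_prop)).integrableOn_compact isCompact_Icc
  have step2 : ∫ x in Set.Icc (0:ℝ) 1, (e1 x + e1 (1-x))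
      = (∫ x in Set.Icc (0:ℝ) 1, e1 x) + ∫ x in Set.Icc (0:ℝ) 1, e1 (1-x) :=
    integral_add hi1 hi2
  have step3 : (∫ x in Set.Icc (0:ℝ) 1, e1 (1-x)) = ∫ x in Set.Icc (0:ℝ) 1, e1 x := by
    rw [MeasureTheory.integral_Icc_eq_integral_Ioc, MeasureTheory.integral_Icc_eq_integral_Ioc,
      ← intervalIntegral.integral_of_le (by norm_num : (0:ℝ) ≤ 1),
      ← intervalIntegral.integral_of_le (by norm_num : (0:ℝ) ≤ 1)]
    simpa using intervalIntegral.integral_comp_sub_left e1 1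
  have step4 : (∫ x in Set.Icc (0:ℝ) 1, e1 x) ≤ √(π/b) := by
    calc (∫ x in Set.Icc (0:ℝ) 1, e1 x) ≤ ∫ x : ℝ, e1 x :=
          setIntegral_le_integral (integrable_exp_neg_mul_sq hb0)
            (Filter.Eventually.of_forall fun x => Real.exp_nonneg _)
      _ = √(π/b) := by rw [he1]; exact integral_gaussian b
  calc ∫ x in Set.Icc (0:ℝ) 1, Real.exp (-(t*γ)*(4*Real.sin (π*x)^2))
      ≤ (∫ x in Set.Icc (0:ℝ) 1, e1 x) + ∫ x in Set.Icc (0:ℝ) 1, e1 (1-x) := step1.trans_eq step2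
    _ = 2 * ∫ x in Set.Icc (0:ℝ) 1, e1 x := by rw [step3]; ring
    _ ≤ 2 * √(π/(16*t*γ)) := by rw [← hb]; linarith [step4]

set_option maxHeartbeats 1000000 in
/-- the term C₄(t) behaves as t^{-d/2} as t → ∞. -/
theorem stmt2 (γ : ℝ) (hγ : 0 < γ) (d : ℕ) (hd : 1 ≤ d) :
    ∃ C : ℝ, 1 < C ∧ ∃ T : ℝ, ∀ t : ℝ, T ≤ t →
      (1/C) * t ^ (-(d:ℝ)/2) ≤
        (∫ θ in Set.Icc (0 : Fin d → ℝ) 1,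
          Real.sin (2*π*(θ ⟨0, hd⟩))^2 / (4*∑ a, Real.sin (π * θ a)^2) *
            Real.exp (-(t*γ)*(4*∑ a, Real.sin (π * θ a)^2)))
      ∧ (∫ θ in Set.Icc (0 : Fin d → ℝ) 1,
          Real.sin (2*π*(θ ⟨0, hd⟩))^2 / (4*∑ a, Real.sin (π * θ a)^2) *
            Real.exp (-(t*γ)*(4*∑ a, Real.sin (π * θ a)^2)))
        ≤ C * t ^ (-(d:ℝ)/2) := by
  have hπ := Real.pi_pos
  have hd0 : (0:ℝ) < (d:ℝ) := by exact_mod_cast hd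
  set D : ℝ := (d:ℝ) * π^2 with hD
  have hD0 : 0 < D := by positivity
  set C₁ : ℝ := (2 * Real.sqrt (π/(16*γ)))^d with hC₁
  set K : ℝ := 4^d * D * Real.exp (γ * D) with hK
  have hK0 : 0 < K := by positivity
  set C : ℝ := max C₁ K + 1 with hC
  have hC0 : 1 < C := by
    have h2 : K ≤ max C₁ K := le_max_right _ _
    rw [hC]; linarith
  refine ⟨C, hC0, 4, fun t ht => ?_⟩
  have ht0 : (0:ℝ) < t := by linarith
  set s : ℝ := Real.sqrt t with hs
  have hs0 : 0 < s := Real.sqrt_pos.2 ht0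
  have hst : s^2 = t := Real.sq_sqrt ht0.le
  have hs2 : 2 ≤ s := by
    rw [hs, show (2:ℝ) = Real.sqrt 4 by rw [show (4:ℝ) = 2^2 by norm_num, Real.sqrt_sq]; norm_num]
    exact Real.sqrt_le_sqrt ht
  have tpow : t ^ (-(d:ℝ)/2) = (1/s)^d := by
    rw [show (-(d:ℝ)/2) = -(1/2 : ℝ) * (d:ℝ) by ring, Real.rpow_mul ht0.le,
      Real.rpow_natCast]
    congr 1
    rw [Real.rpow_neg ht0.le, ← Real.sqrt_eq_rpow, one_div]
  have tpow0 : 0 ≤ t ^ (-(d:ℝ)/2) := Real.rpow_nonneg ht0.le _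
  set i0 : Fin d := ⟨0, hd⟩ with hi0
  set S : (Fin d → ℝ) → ℝ := fun θ => ∑ a, Real.sin (π * θ a)^2 with hSdef
  set f : (Fin d → ℝ) → ℝ := fun θ =>
    Real.sin (2*π*(θ i0))^2 / (4*S θ) * Real.exp (-(t*γ)*(4*S θ)) with hfdef
  have hSnn : ∀ θ, 0 ≤ S θ := fun θ => Finset.sum_nonneg fun a _ => sq_nonneg _
  have hfnn : ∀ θ, 0 ≤ f θ := fun θ =>
    mul_nonneg (div_nonneg (sq_nonneg _) (by linarith [hSnn θ])) (Real.exp_nonneg _)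
  have hratio_le_one : ∀ θ, Real.sin (2*π*(θ i0))^2 / (4*S θ) ≤ 1 := by
    intro θ
    rcases eq_or_lt_of_le (hSnn θ) with h | h
    · rw [← h]; norm_num
    · rw [div_le_one (by linarith)]
      have h1 : Real.sin (π * θ i0)^2 ≤ S θ :=
        Finset.single_le_sum (fun a _ => sq_nonneg (Real.sin (π * θ a))) (Finset.mem_univ i0)
      have h2 : Real.sin (2*π*(θ i0)) = 2 * Real.sin (π * θ i0) * Real.cos (π * θ i0) := by
        rw [show 2*π*(θ i0) = 2*(π * θ i0) by ring, Real.sin_two_mul]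
      have h3 := Real.cos_sq_le_one (π * θ i0)
      rw [h2]
      nlinarith [mul_nonneg (sq_nonneg (Real.sin (π * θ i0)))
        (by linarith : (0:ℝ) ≤ 1 - Real.cos (π * θ i0)^2)]
  -- upper bound
  have upper : (∫ θ in Set.Icc (0 : Fin d → ℝ) 1, f θ) ≤ C * t ^ (-(d:ℝ)/2) := by
    have hfg : ∀ θ, f θ ≤ ∏ a, Real.exp (-(t*γ)*(4*Real.sin (π * θ a)^2)) := by
      intro θ
      have hprod : Real.exp (-(t*γ)*(4*S θ)) = ∏ a, Real.exp (-(t*γ)*(4*Real.sin (π * θ a)^2)) := by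
        rw [← Real.exp_sum]
        congr 1
        rw [hSdef]
        simp [Finset.mul_sum]
      calc f θ ≤ 1 * Real.exp (-(t*γ)*(4*S θ)) :=
            mul_le_mul_of_nonneg_right (hratio_le_one θ) (Real.exp_nonneg _)
        _ = ∏ a, Real.exp (-(t*γ)*(4*Real.sin (π * θ a)^2)) := by rw [one_mul, hprod]
    have hsin : Continuous fun x : ℝ => Real.sin (π*x) :=
      Real.continuous_sin.comp (continuous_const.mul continuous_id)
    have hcont1 : Continuous fun x : ℝ => Real.exp (-(t*γ)*(4*Real.sin (π*x)^2)) :=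
      Real.continuous_exp.comp (continuous_const.mul (continuous_const.mul (hsin.pow 2)))
    have hcontd : Continuous fun θ : Fin d → ℝ =>
        ∏ a, Real.exp (-(t*γ)*(4*Real.sin (π * θ a)^2)) :=
      continuous_finset_prod Finset.univ fun a _ => hcont1.comp (continuous_apply a)
    have hgi : IntegrableOn (fun θ => ∏ a, Real.exp (-(t*γ)*(4*Real.sin (π * (θ:Fin d → ℝ) a)^2)))
        (Set.Icc (0 : Fin d → ℝ) 1) :=
      hcontd.continuousOn.integrableOn_compact isCompact_Icc
    have step : (∫ θ in Set.Icc (0 : Fin d → ℝ) 1, f θ)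
        ≤ ∫ θ in Set.Icc (0 : Fin d → ℝ) 1, ∏ a, Real.exp (-(t*γ)*(4*Real.sin (π * θ a)^2)) :=
      integral_mono_of_nonneg (Eventually.of_forall hfnn) hgi (Eventually.of_forall hfg)
    have heq : (∫ θ in Set.Icc (0 : Fin d → ℝ) 1, ∏ a, Real.exp (-(t*γ)*(4*Real.sin (π * θ a)^2)))
        = (∫ x in Set.Icc (0:ℝ) 1, Real.exp (-(t*γ)*(4*Real.sin (π*x)^2)))^d :=
      box_prod_integral (fun x => Real.exp (-(t*γ)*(4*Real.sin (π*x)^2)))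
    have hJnn : 0 ≤ ∫ x in Set.Icc (0:ℝ) 1, Real.exp (-(t*γ)*(4*Real.sin (π*x)^2)) :=
      setIntegral_nonneg measurableSet_Icc fun x _ => Real.exp_nonneg _
    have hJbd := oneD_bound γ t hγ ht
    have hsqrt : Real.sqrt (π/(16*t*γ)) = Real.sqrt (π/(16*γ)) * (1/s) := by
      rw [show π/(16*t*γ) = (π/(16*γ))/t by ring, Real.sqrt_div (by positivity), ← hs]
      ring
    have hpow : (∫ x in Set.Icc (0:ℝ) 1, Real.exp (-(t*γ)*(4*Real.sin (π*x)^2)))^d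
        ≤ (2 * Real.sqrt (π/(16*t*γ)))^d := pow_le_pow_left₀ hJnn hJbd d
    have hfinal : (2 * Real.sqrt (π/(16*t*γ)))^d = C₁ * (1/s)^d := by
      rw [hsqrt, hC₁, ← mul_pow]
      ring_nf
    calc (∫ θ in Set.Icc (0 : Fin d → ℝ) 1, f θ)
        ≤ ∫ θ in Set.Icc (0 : Fin d → ℝ) 1, ∏ a, Real.exp (-(t*γ)*(4*Real.sin (π * θ a)^2)) := step
      _ = (∫ x in Set.Icc (0:ℝ) 1, Real.exp (-(t*γ)*(4*Real.sin (π*x)^2)))^d := heq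
      _ ≤ (2 * Real.sqrt (π/(16*t*γ)))^d := hpow
      _ = C₁ * (1/s)^d := hfinal
      _ = C₁ * t ^ (-(d:ℝ)/2) := by rw [tpow]
      _ ≤ C * t ^ (-(d:ℝ)/2) := by
          apply mul_le_mul_of_nonneg_right _ tpow0
          rw [hC]; linarith [le_max_left C₁ K]
  -- lower bound
  set a₀ : ℝ := 1/(4*s) with ha₀
  set b₀ : ℝ := 1/(2*s) with hb₀
  have ha0 : 0 < a₀ := by positivity
  have hab : a₀ ≤ b₀ := by
    rw [ha₀, hb₀]
    apply div_le_div_of_nonneg_left (by norm_num) (by positivity) (by linarith)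
  have hb14 : b₀ ≤ 1/4 := by
    rw [hb₀, div_le_div_iff₀ (by positivity) (by norm_num)]
    linarith
  set R : Set (Fin d → ℝ) := Set.Icc (fun _ => a₀) (fun _ => b₀) with hR
  have hRbox : R ⊆ Set.Icc (0 : Fin d → ℝ) 1 :=
    Set.Icc_subset_Icc (fun i => by simp only [Pi.zero_apply]; exact ha0.le)
      (fun i => by simp only [Pi.one_apply]; linarith [hb14])
  have hmeasS : Measurable S := by
    rw [hSdef]
    exact Finset.measurable_sum _ fun a _ =>
      (Real.measurable_sin.comp (measurable_const.mul (measurable_pi_apply a))).pow_const 2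
  have hmeas : Measurable f := by
    rw [hfdef]
    exact ((Real.measurable_sin.comp
        (measurable_const.mul (measurable_pi_apply i0))).pow_const 2 |>.div
        (measurable_const.mul hmeasS)).mul
      (Real.measurable_exp.comp (measurable_const.mul (measurable_const.mul hmeasS)))
  have hfle1 : ∀ θ, f θ ≤ 1 := by
    intro θ
    have h1 := hratio_le_one θ
    have h2 : Real.exp (-(t*γ)*(4*S θ)) ≤ 1 :=
      Real.exp_le_one_iff.2 (by nlinarith [hSnn θ, mul_nonneg ht0.le hγ.le])
    have h3 : 0 ≤ Real.sin (2*π*(θ i0))^2 / (4*S θ) :=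
      div_nonneg (sq_nonneg _) (by linarith [hSnn θ])
    calc f θ ≤ 1 * 1 := mul_le_mul h1 h2 (Real.exp_nonneg _) (by linarith)
      _ = 1 := by norm_num
  have hfint : IntegrableOn f (Set.Icc (0 : Fin d → ℝ) 1) := by
    apply Integrable.mono' (g := fun _ => (1:ℝ))
      (integrableOn_const isCompact_Icc.measure_lt_top.ne)
      hmeas.aestronglyMeasurable
    exact Eventually.of_forall fun θ => by
      rw [Real.norm_eq_abs, abs_of_nonneg (hfnn θ)]; exact hfle1 θ
  set E : ℝ := Real.exp (-(γ * D)) with hE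
  have hptlow : ∀ θ ∈ R, 1/D * E ≤ f θ := by
    intro θ hθ
    obtain ⟨hl, hu⟩ := hθ
    have hθi : ∀ i, a₀ ≤ θ i ∧ θ i ≤ b₀ := fun i => ⟨hl i, hu i⟩
    have hθpos : ∀ i, 0 < θ i := fun i => lt_of_lt_of_le ha0 (hθi i).1
    have hθ14 : ∀ i, θ i ≤ 1/4 := fun i => (hθi i).2.trans hb14
    have hb2 : (π * b₀)^2 = π^2/(4*t) := by
      rw [hb₀, ← hst]; field_simp; ring
    have hsinsq : ∀ i, Real.sin (π * θ i)^2 ≤ π^2/(4*t) := by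
      intro i
      have h0 : 0 ≤ Real.sin (π * θ i) :=
        Real.sin_nonneg_of_nonneg_of_le_pi (mul_nonneg hπ.le (hθpos i).le)
          (by nlinarith [hθ14 i, hπ])
      have h1 : Real.sin (π * θ i) ≤ π * θ i :=
        Real.sin_le (mul_nonneg hπ.le (hθpos i).le)
      have h2 : π * θ i ≤ π * b₀ := by nlinarith [(hθi i).2]
      nlinarith
    have hSle : S θ ≤ D/(4*t) := by
      have : S θ ≤ ∑ _a : Fin d, π^2/(4*t) := Finset.sum_le_sum fun a _ => hsinsq a
      rw [Finset.sum_const, Finset.card_univ, Fintype.card_fin, nsmul_eq_mul] at this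
      calc S θ ≤ (d:ℝ) * (π^2/(4*t)) := this
        _ = D/(4*t) := by rw [hD]; ring
    have hSle4 : S θ * (4*t) ≤ D := (le_div_iff₀ (by positivity)).mp hSle
    have hexp : E ≤ Real.exp (-(t*γ)*(4*S θ)) := by
      rw [hE]
      apply Real.exp_le_exp.2
      nlinarith [hγ.le]
    have hsin2 : 1/s ≤ Real.sin (2*π*(θ i0)) := by
      have hx0 : 0 ≤ 2*π*(θ i0) := mul_nonneg (by positivity) (hθpos i0).le
      have hx2 : 2*π*(θ i0) ≤ π/2 := by nlinarith [hθ14 i0]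
      have hms := Real.mul_le_sin hx0 hx2
      have h4 : 2/π * (2*π*(θ i0)) = 4 * θ i0 := by field_simp; ring
      have h5 : 4 * a₀ = 1/s := by rw [ha₀]; field_simp
      nlinarith [(hθi i0).1]
    have hsin2sq : 1/t ≤ Real.sin (2*π*(θ i0))^2 := by
      have h1s : ((1:ℝ)/s)^2 = 1/t := by rw [← hst]; field_simp
      exact h1s ▸ (pow_le_pow_left₀ (by positivity) hsin2 2)
    have hSpos : 0 < S θ := by
      have hsp : 0 < Real.sin (π * θ i0) :=
        Real.sin_pos_of_pos_of_lt_pi (mul_pos hπ (hθpos i0)) (by nlinarith [hθ14 i0, hπ])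
      have h1 : Real.sin (π * θ i0)^2 ≤ S θ :=
        Finset.single_le_sum (fun a _ => sq_nonneg (Real.sin (π * θ a))) (Finset.mem_univ i0)
      nlinarith
    have h4S : 4*S θ ≤ D/t := by
      rw [le_div_iff₀ ht0]; linarith
    have hratio : 1/D ≤ Real.sin (2*π*(θ i0))^2 / (4*S θ) := by
      rw [le_div_iff₀ (by linarith)]
      calc 1/D * (4*S θ) ≤ 1/D * (D/t) :=
            mul_le_mul_of_nonneg_left h4S (by positivity)
        _ = 1/t := by field_simp
        _ ≤ Real.sin (2*π*(θ i0))^2 := hsin2sq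
    calc 1/D * E
        ≤ (Real.sin (2*π*(θ i0))^2 / (4*S θ)) * Real.exp (-(t*γ)*(4*S θ)) :=
          mul_le_mul hratio hexp (by positivity) (div_nonneg (sq_nonneg _) (by linarith))
      _ = f θ := rfl
  have hvol : (volume R).toReal = a₀^d := by
    rw [hR, Real.volume_Icc_pi_toReal (fun i => hab)]
    rw [Finset.prod_const, Finset.card_univ, Fintype.card_fin]
    congr 1
    rw [ha₀, hb₀]
    field_simp
    ring
  have hlow1 : (1/D * E) * (volume R).toReal ≤ ∫ θ in R, f θ :=
    by
      have := setIntegral_ge_of_const_le measurableSet_Icc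
        ((isCompact_Icc.measure_lt_top).ne) hptlow (hfint.mono_set hRbox)
      rwa [smul_eq_mul, mul_comm, measureReal_def] at this
  have hlow2 : (∫ θ in R, f θ) ≤ ∫ θ in Set.Icc (0 : Fin d → ℝ) 1, f θ :=
    setIntegral_mono_set hfint (Eventually.of_forall hfnn) hRbox.eventuallyLE
  have h1C : 1/C * t^(-(d:ℝ)/2) ≤ (1/D * E) * a₀^d := by
    have e1 : (a₀:ℝ)^d = (1/4:ℝ)^d * (1/s)^d := by
      rw [← mul_pow, ha₀]; congr 1; ring
    have h1 : (1/D * E) * a₀^d = (1/K) * (1/s)^d := by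
      rw [e1, hK, hE, Real.exp_neg]
      have h4 : ((1:ℝ)/4)^d = 1/(4:ℝ)^d := by rw [div_pow, one_pow]
      rw [h4]
      field_simp
    have h2 : 1/C ≤ 1/K :=
      one_div_le_one_div_of_le hK0 (by rw [hC]; linarith [le_max_right C₁ K])
    rw [tpow, h1]
    exact mul_le_mul_of_nonneg_right h2 (by positivity)
  refine ⟨?_, upper⟩
  calc 1/C * t^(-(d:ℝ)/2) ≤ (1/D * E) * a₀^d := h1C
    _ = (1/D * E) * (volume R).toReal := by rw [hvol]
    _ ≤ ∫ θ in R, f θ := hlow1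
    _ ≤ ∫ θ in Set.Icc (0 : Fin d → ℝ) 1, f θ := hlow2
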